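/- Let χ²(n) denote a chi-squared random variable with n degrees of freedom. Then for any x > 0, P(|χ²(n)/n - 1| > x) ≤ 2·exp(-n·x·min(x,1)/8). -/

import Mathlib

open MeasureTheory ProbabilityTheory Real
open scoped ENNReal NNReal

lemma integral_exp_mul_sq_gaussian (t : ℝ) (ht : t < 1/2) :
    ∫ z, Real.exp (t * z ^ 2) ∂(gaussianReal 0 1) = (Real.sqrt (1 - 2*t))⁻¹ := by
  rw [gaussianReal_of_var_ne_zero _ one_ne_zero]
  have hmeas : Measurable fun x => (gaussianPDFReal 0 1 x).toNNReal :=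
    (measurable_gaussianPDFReal 0 1).real_toNNReal
  have hpdf : (gaussianPDF 0 1) = fun x => ((gaussianPDFReal 0 1 x).toNNReal : ℝ≥0∞) := rfl
  rw [hpdf, integral_withDensity_eq_integral_smul hmeas]
  have heq : ∀ x : ℝ, ((gaussianPDFReal 0 1 x).toNNReal : ℝ≥0) • Real.exp (t * x ^ 2)
      = ((Real.sqrt (2 * π))⁻¹) * Real.exp (-(1/2 - t) * x ^ 2) := by
    intro x
    have h0 : (0:ℝ) ≤ gaussianPDFReal 0 1 x := gaussianPDFReal_nonneg 0 1 x
    rw [NNReal.smul_def, Real.coe_toNNReal _ h0]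
    simp only [gaussianPDFReal_def, NNReal.coe_one, mul_one, sub_zero]
    rw [smul_eq_mul, mul_assoc, ← Real.exp_add]
    congr 1
    rw [Real.exp_eq_exp]
    ring
  simp_rw [heq]
  rw [integral_const_mul, integral_gaussian]
  have h2 : (0:ℝ) < 1/2 - t := by linarith
  have h3 : (1:ℝ) - 2*t ≠ 0 := by linarith
  have hπ : π ≠ 0 := Real.pi_ne_zero
  rw [← Real.sqrt_inv (2*π), ← Real.sqrt_mul (by positivity), ← Real.sqrt_inv]
  congr 1
  rw [show ((1:ℝ)-2*t)⁻¹ = 1/(1-2*t) from inv_eq_one_div _, eq_div_iff h3]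
  field_simp

lemma integrable_exp_mul_sq_gaussian (t : ℝ) (ht : t < 1/2) :
    Integrable (fun z => Real.exp (t * z ^ 2)) (gaussianReal 0 1) := by
  rw [gaussianReal_of_var_ne_zero _ one_ne_zero]
  have hmeas : Measurable fun x => (gaussianPDFReal 0 1 x).toNNReal :=
    (measurable_gaussianPDFReal 0 1).real_toNNReal
  have hpdf : (gaussianPDF 0 1) = fun x => ((gaussianPDFReal 0 1 x).toNNReal : ℝ≥0∞) := rfl
  rw [hpdf, integrable_withDensity_iff_integrable_smul hmeas]
  have heq : ∀ x : ℝ, ((gaussianPDFReal 0 1 x).toNNReal : ℝ≥0) • Real.exp (t * x ^ 2)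
      = ((Real.sqrt (2 * π))⁻¹) * Real.exp (-(1/2 - t) * x ^ 2) := by
    intro x
    have h0 : (0:ℝ) ≤ gaussianPDFReal 0 1 x := gaussianPDFReal_nonneg 0 1 x
    rw [NNReal.smul_def, Real.coe_toNNReal _ h0]
    simp only [gaussianPDFReal_def, NNReal.coe_one, mul_one, sub_zero]
    rw [smul_eq_mul, mul_assoc, ← Real.exp_add]
    congr 1
    rw [Real.exp_eq_exp]
    ring
  simp_rw [heq]
  exact (integrable_exp_neg_mul_sq (by linarith)).const_mul _

lemma log_ineq_up {x : ℝ} (hx : 0 ≤ x) : Real.log (1 + x) ≤ x - x * min x 1 / 4 := by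
  have h1 : (0:ℝ) < 1 + x := by linarith
  rw [Real.log_le_iff_le_exp h1]
  rcases le_total x 1 with hx1 | hx1
  · rw [min_eq_left hx1]
    have hv : 0 ≤ x - x * x / 4 := by nlinarith
    calc (1:ℝ) + x ≤ 1 + (x - x * x / 4) + (x - x * x / 4) ^ 2 / 2 := by nlinarith
    _ ≤ Real.exp (x - x * x / 4) := Real.quadratic_le_exp_of_nonneg hv
  · rw [min_eq_right hx1]
    have hv : 0 ≤ x - x * 1 / 4 := by nlinarith
    calc (1:ℝ) + x ≤ 1 + (x - x * 1 / 4) + (x - x * 1 / 4) ^ 2 / 2 := by nlinarith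
    _ ≤ Real.exp (x - x * 1 / 4) := Real.quadratic_le_exp_of_nonneg hv

lemma log_ineq_down {x : ℝ} (hx : 0 ≤ x) (hx1 : x < 1) :
    Real.log (1 - x) ≤ -x - x ^ 2 / 4 := by
  have h1 : (0:ℝ) < 1 - x := by linarith
  set s := Real.sqrt (1 - x) with hs
  have hs0 : 0 < s := Real.sqrt_pos.mpr h1
  have hs2 : s ^ 2 = 1 - x := Real.sq_sqrt h1.le
  have hlog : Real.log (1 - x) = 2 * Real.log s := by
    rw [← hs2, Real.log_pow]; push_cast; ring
  have hls : Real.log s ≤ s - 1 := Real.log_le_sub_one_of_pos hs0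
  have hs1 : s ≤ 1 := by
    rw [show (1:ℝ) = Real.sqrt 1 by simp [Real.sqrt_one]]
    exact Real.sqrt_le_sqrt (by linarith)
  have key : 2 * (s - 1) ≤ -x - x ^ 2 / 4 := by nlinarith [sq_nonneg (2 - x - x^2/4 - 2*s), sq_nonneg s, hs2]
  calc Real.log (1 - x) = 2 * Real.log s := hlog
  _ ≤ 2 * (s - 1) := by linarith
  _ ≤ -x - x ^ 2 / 4 := key

lemma mgf_sq_gauss {Ω : Type*} [MeasurableSpace Ω] (μ : Measure Ω) (Z : Ω → ℝ)
    (hm : Measurable Z) (hg : Measure.map Z μ = gaussianReal 0 1) (t : ℝ) (ht : t < 1/2) :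
    mgf (fun ω => (Z ω) ^ 2) μ t = (Real.sqrt (1 - 2*t))⁻¹ := by
  have hsm : AEStronglyMeasurable (fun z : ℝ => Real.exp (t * z ^ 2)) (Measure.map Z μ) :=
    (Real.continuous_exp.comp (by continuity)).aestronglyMeasurable
  rw [mgf]
  calc (μ[fun ω => Real.exp (t * Z ω ^ 2)]) = ∫ z, Real.exp (t * z ^ 2) ∂(Measure.map Z μ) :=
        (integral_map hm.aemeasurable hsm).symm
  _ = (Real.sqrt (1 - 2*t))⁻¹ := by rw [hg]; exact integral_exp_mul_sq_gaussian t ht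

lemma integrable_exp_sq_gauss {Ω : Type*} [MeasurableSpace Ω] (μ : Measure Ω) (Z : Ω → ℝ)
    (hm : Measurable Z) (hg : Measure.map Z μ = gaussianReal 0 1) (t : ℝ) (ht : t < 1/2) :
    Integrable (fun ω => Real.exp (t * (Z ω) ^ 2)) μ := by
  have hsm : AEStronglyMeasurable (fun z : ℝ => Real.exp (t * z ^ 2)) (Measure.map Z μ) :=
    (Real.continuous_exp.comp (by continuity)).aestronglyMeasurable
  have h : Integrable (fun z : ℝ => Real.exp (t * z ^ 2)) (Measure.map Z μ) := by
    rw [hg]; exact integrable_exp_mul_sq_gaussian t ht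
  exact (integrable_map_measure hsm hm.aemeasurable).mp h

lemma chisq_mgf_sum {n : ℕ} {Ωs : Type*} [MeasurableSpace Ωs] (μ : Measure Ωs)
    [IsProbabilityMeasure μ]
    (Z : Fin n → Ωs → ℝ) (hmeas : ∀ i, Measurable (Z i))
    (hindep : iIndepFun Z μ)
    (hgauss : ∀ i, Measure.map (Z i) μ = gaussianReal 0 1)
    (t : ℝ) (ht : t < 1/2) :
    mgf (fun ω => ∑ i, Z i ω ^ 2) μ t = ((Real.sqrt (1 - 2*t))⁻¹) ^ n := by
  have hindep2 : iIndepFun (fun i ω => Z i ω ^ 2) μ :=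
    hindep.comp (fun _ z => z ^ 2) (fun _ => measurable_id.pow_const 2)
  have hmeas2 : ∀ i, Measurable (fun ω => Z i ω ^ 2) := fun i => (hmeas i).pow_const 2
  have hsum : (fun ω => ∑ i, Z i ω ^ 2) = ∑ i, (fun ω => Z i ω ^ 2) := by
    funext ω; simp [Finset.sum_apply]
  rw [hsum, hindep2.mgf_sum hmeas2 Finset.univ]
  have : ∀ i : Fin n, mgf (fun ω => Z i ω ^ 2) μ t = (Real.sqrt (1 - 2*t))⁻¹ := fun i =>
    mgf_sq_gauss μ (Z i) (hmeas i) (hgauss i) t ht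
  simp [this]

lemma chisq_int_sum {n : ℕ} {Ωs : Type*} [MeasurableSpace Ωs] (μ : Measure Ωs)
    [IsProbabilityMeasure μ]
    (Z : Fin n → Ωs → ℝ) (hmeas : ∀ i, Measurable (Z i))
    (hindep : iIndepFun Z μ)
    (hgauss : ∀ i, Measure.map (Z i) μ = gaussianReal 0 1)
    (t : ℝ) (ht : t < 1/2) :
    Integrable (fun ω => Real.exp (t * ∑ i, Z i ω ^ 2)) μ := by
  have hindep2 : iIndepFun (fun i ω => Z i ω ^ 2) μ :=
    hindep.comp (fun _ z => z ^ 2) (fun _ => measurable_id.pow_const 2)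
  have hmeas2 : ∀ i, Measurable (fun ω => Z i ω ^ 2) := fun i => (hmeas i).pow_const 2
  have h := hindep2.integrable_exp_mul_sum (t := t) hmeas2
    (s := Finset.univ) (fun i _ => integrable_exp_sq_gauss μ (Z i) (hmeas i) (hgauss i) t ht)
  simpa [Finset.sum_apply] using h

/-- Chi-squared tail bound: if `χ²(n)` is the sum of squares of `n` i.i.d. standard normals,
then for any `x > 0`, `P(|χ²(n)/n - 1| > x) ≤ 2 exp (-n x min(x,1) / 8)`. -/
theorem stmt_6 {n : ℕ} {Ωs : Type*} [MeasurableSpace Ωs] (μ : Measure Ωs)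
    [IsProbabilityMeasure μ]
    (Z : Fin n → Ωs → ℝ) (hmeas : ∀ i, Measurable (Z i))
    (hindep : iIndepFun Z μ)
    (hgauss : ∀ i, Measure.map (Z i) μ = gaussianReal 0 1)
    (x : ℝ) (hx : 0 < x) :
    μ {ω | |(∑ i, Z i ω ^ 2) / n - 1| > x}
      ≤ ENNReal.ofReal (2 * Real.exp (-(n : ℝ) * x * min x 1 / 8)) := by
  rcases Nat.eq_zero_or_pos n with hn | hn
  · subst hn
    have h2 : (1:ℝ≥0∞) ≤ ENNReal.ofReal (2 * Real.exp (-(0:ℕ) * x * min x 1 / 8)) := by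
      simp only [Nat.cast_zero, neg_zero, zero_mul, zero_div, Real.exp_zero, mul_one]
      rw [show ((2:ℝ)) = ((2:ℝ≥0∞)).toReal from by simp, ENNReal.ofReal_toReal (by simp)]
      exact one_le_two
    exact le_trans prob_le_one h2
  have npos : (0:ℝ) < n := by exact_mod_cast hn
  have hm0 : 0 < min x 1 := lt_min hx one_pos
  have hmx : min x 1 ≤ x := min_le_left _ _
  have hm1 : min x 1 ≤ 1 := min_le_right _ _
  have hx1 : (0:ℝ) < 1 + x := by linarith
  -- upper tail
  set t : ℝ := x / (2 * (1 + x)) with htdef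
  have ht0 : 0 ≤ t := by positivity
  have ht : t < 1/2 := by rw [div_lt_iff₀ (by positivity)]; nlinarith
  have h1t : 1 - 2*t = (1+x)⁻¹ := by
    rw [htdef]
    rw [eq_comm, inv_eq_one_div, div_eq_iff hx1.ne']
    field_simp
    ring
  have hA : (μ {ω | (n:ℝ) * (1+x) ≤ ∑ i, Z i ω ^ 2}).toReal
      ≤ Real.exp (-(n:ℝ) * x * min x 1 / 8) := by
    have hcher := measure_ge_le_exp_mul_mgf (μ := μ) (X := fun ω => ∑ i, Z i ω ^ 2)
      ((n:ℝ)*(1+x)) ht0 (chisq_int_sum μ Z hmeas hindep hgauss t ht)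
    rw [chisq_mgf_sum μ Z hmeas hindep hgauss t ht] at hcher
    refine hcher.trans ?_
    have hfac : (Real.sqrt (1 - 2*t))⁻¹ = Real.sqrt (1+x) := by
      rw [h1t, Real.sqrt_inv, inv_inv]
    rw [hfac]
    have e1 : -t * ((n:ℝ)*(1+x)) = (n:ℝ) * (-(x/2)) := by
      rw [htdef]
      field_simp
    rw [e1, Real.exp_nat_mul,
      show -(n:ℝ) * x * min x 1 / 8 = (n:ℝ) * (-(x * min x 1 / 8)) from by ring,
      Real.exp_nat_mul, ← mul_pow]
    apply pow_le_pow_left₀ (by positivity)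
    have hsq : Real.sqrt (1+x) = Real.exp (Real.log (1+x) / 2) := by
      rw [← Real.exp_log (Real.sqrt_pos.mpr hx1), Real.log_sqrt hx1.le]
    rw [hsq, ← Real.exp_add, Real.exp_le_exp]
    have hl := log_ineq_up hx.le
    linarith
  have hAe : μ {ω | (n:ℝ) * (1+x) ≤ ∑ i, Z i ω ^ 2}
      ≤ ENNReal.ofReal (Real.exp (-(n:ℝ) * x * min x 1 / 8)) := by
    rw [← ENNReal.ofReal_toReal (measure_ne_top μ _)]
    exact ENNReal.ofReal_le_ofReal hA
  -- lower tail
  have hBe : μ {ω | (∑ i, Z i ω ^ 2) < (n:ℝ)*(1-x)}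
      ≤ ENNReal.ofReal (Real.exp (-(n:ℝ) * x * min x 1 / 8)) := by
    rcases le_or_gt 1 x with hge | hlt
    · have hempty : {ω | (∑ i, Z i ω ^ 2) < (n:ℝ)*(1-x)} = (∅ : Set Ωs) := by
        ext ω
        simp only [Set.mem_setOf_eq, Set.mem_empty_iff_false, iff_false, not_lt]
        have hS0 : (0:ℝ) ≤ ∑ i, Z i ω ^ 2 := Finset.sum_nonneg fun i _ => sq_nonneg _
        nlinarith
      rw [hempty]
      simp
    · have hmx' : min x 1 = x := min_eq_left hlt.le
      have h1x : (0:ℝ) < 1 - x := by linarith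
      set s : ℝ := x / (2*(1-x)) with hsdef
      have hs0 : 0 ≤ s := by positivity
      have hns : -s < 1/2 := by
        have : 0 ≤ s := hs0
        linarith
      have h1s : 1 - 2*(-s) = (1-x)⁻¹ := by
        rw [hsdef]
        rw [eq_comm, inv_eq_one_div, div_eq_iff h1x.ne']
        field_simp
        ring
      have hint : Integrable (fun ω => Real.exp (s * (-(∑ i, Z i ω ^ 2)))) μ := by
        have h := chisq_int_sum μ Z hmeas hindep hgauss (-s) hns
        simpa [neg_mul, mul_neg] using h
      have hcher := measure_ge_le_exp_mul_mgf (μ := μ) (X := fun ω => -(∑ i, Z i ω ^ 2))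
        (-((n:ℝ)*(1-x))) hs0 hint
      have hmgfneg : mgf (fun ω => -(∑ i, Z i ω ^ 2)) μ s
          = mgf (fun ω => ∑ i, Z i ω ^ 2) μ (-s) :=
        mgf_neg (X := fun ω => ∑ i, Z i ω ^ 2)
      rw [hmgfneg, chisq_mgf_sum μ Z hmeas hindep hgauss (-s) hns] at hcher
      have hreal : Real.exp (-s * -((n:ℝ)*(1-x))) * ((Real.sqrt (1 - 2*(-s)))⁻¹) ^ n
          ≤ Real.exp (-(n:ℝ) * x * min x 1 / 8) := by
        have hfac : (Real.sqrt (1 - 2*(-s)))⁻¹ = Real.sqrt (1-x) := by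
          rw [h1s, Real.sqrt_inv, inv_inv]
        rw [hfac]
        have e1 : -s * -((n:ℝ)*(1-x)) = (n:ℝ) * (x/2) := by
          rw [hsdef]
          field_simp
        rw [e1, Real.exp_nat_mul,
          show -(n:ℝ) * x * min x 1 / 8 = (n:ℝ) * (-(x * min x 1 / 8)) from by ring,
          Real.exp_nat_mul, ← mul_pow]
        apply pow_le_pow_left₀ (by positivity)
        have hsq : Real.sqrt (1-x) = Real.exp (Real.log (1-x) / 2) := by
          rw [← Real.exp_log (Real.sqrt_pos.mpr h1x), Real.log_sqrt h1x.le]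
        rw [hsq, ← Real.exp_add, Real.exp_le_exp]
        have hl := log_ineq_down hx.le hlt
        rw [hmx']
        nlinarith
      have hsub : {ω | (∑ i, Z i ω ^ 2) < (n:ℝ)*(1-x)}
          ⊆ {ω | -((n:ℝ)*(1-x)) ≤ -(∑ i, Z i ω ^ 2)} := by
        intro ω hω
        simp only [Set.mem_setOf_eq] at *
        linarith
      calc μ {ω | (∑ i, Z i ω ^ 2) < (n:ℝ)*(1-x)}
          ≤ μ {ω | -((n:ℝ)*(1-x)) ≤ -(∑ i, Z i ω ^ 2)} := measure_mono hsub
      _ = ENNReal.ofReal ((μ {ω | -((n:ℝ)*(1-x)) ≤ -(∑ i, Z i ω ^ 2)}).toReal) :=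
          (ENNReal.ofReal_toReal (measure_ne_top μ _)).symm
      _ ≤ ENNReal.ofReal (Real.exp (-(n:ℝ) * x * min x 1 / 8)) :=
          ENNReal.ofReal_le_ofReal (hcher.trans hreal)
  -- combine
  have hsub2 : {ω | |(∑ i, Z i ω ^ 2) / n - 1| > x}
      ⊆ {ω | (n:ℝ) * (1+x) ≤ ∑ i, Z i ω ^ 2} ∪ {ω | (∑ i, Z i ω ^ 2) < (n:ℝ)*(1-x)} := by
    intro ω hω
    simp only [Set.mem_setOf_eq, Set.mem_union, gt_iff_lt] at *
    rcases lt_abs.mp hω with h | h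
    · left
      have h2 : 1 + x < (∑ i, Z i ω ^ 2) / n := by linarith
      have h3 := (lt_div_iff₀ npos).mp h2
      linarith
    · right
      have h2 : (∑ i, Z i ω ^ 2) / n < 1 - x := by linarith
      have h3 := (div_lt_iff₀ npos).mp h2
      linarith
  calc μ {ω | |(∑ i, Z i ω ^ 2) / n - 1| > x}
      ≤ μ ({ω | (n:ℝ) * (1+x) ≤ ∑ i, Z i ω ^ 2} ∪ {ω | (∑ i, Z i ω ^ 2) < (n:ℝ)*(1-x)}) :=
        measure_mono hsub2
  _ ≤ μ {ω | (n:ℝ) * (1+x) ≤ ∑ i, Z i ω ^ 2} + μ {ω | (∑ i, Z i ω ^ 2) < (n:ℝ)*(1-x)} :=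
        measure_union_le _ _
  _ ≤ ENNReal.ofReal (Real.exp (-(n:ℝ) * x * min x 1 / 8))
        + ENNReal.ofReal (Real.exp (-(n:ℝ) * x * min x 1 / 8)) := add_le_add hAe hBe
  _ = ENNReal.ofReal (2 * Real.exp (-(n : ℝ) * x * min x 1 / 8)) := by
        rw [← ENNReal.ofReal_add (by positivity) (by positivity), two_mul]
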